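/- With V = (W + c·(tr W)·I_p)⁻¹, one has −c·(tr(V)·tr(W) − tr(V W))/(1 + c p) ≤ −tr(V W) + (1 + c)·tr(V² W²) ≤ 0. -/

import Mathlib

open Matrix

set_option linter.unusedSectionVars false

section AuxLemmas
variable {n : Type*} [Fintype n] [DecidableEq n]

open scoped MatrixOrder in
lemma auxSqrt {A : Matrix n n ℝ} (hA : A.PosSemidef) :
    ∃ B : Matrix n n ℝ, B * B = A ∧ Bᵀ = B := by
  refine ⟨CFC.sqrt A, CFC.sqrt_mul_sqrt_self A hA.nonneg, ?_⟩
  have := (CFC.sqrt_nonneg A).posSemidef.1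
  rwa [Matrix.IsHermitian, Matrix.conjTranspose_eq_transpose_of_trivial] at this

lemma auxTraceNonneg {A : Matrix n n ℝ} (hA : A.PosSemidef) : 0 ≤ A.trace := by
  rw [Matrix.trace]
  refine Finset.sum_nonneg fun i _ => ?_
  simpa using hA.dotProduct_mulVec_nonneg (Pi.single i 1)

lemma auxTraceMulNonneg {A B : Matrix n n ℝ} (hA : A.PosSemidef) (hB : B.PosSemidef) :
    0 ≤ (A * B).trace := by
  obtain ⟨S, rfl⟩ : ∃ S : Matrix n n ℝ, A = Sᴴ * S := by
    obtain ⟨B, h1, h2⟩ := auxSqrt hA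
    exact ⟨B, by rw [Matrix.conjTranspose_eq_transpose_of_trivial, h2, h1]⟩
  rw [Matrix.mul_assoc, Matrix.trace_mul_comm]
  exact auxTraceNonneg (hB.mul_mul_conjTranspose_same S)

lemma auxTraceTransposeMul (A B : Matrix n n ℝ) :
    (Aᵀ * B).trace = ∑ q : n × n, A q.2 q.1 * B q.2 q.1 := by
  rw [Matrix.trace, Fintype.sum_prod_type]
  simp only [Matrix.mul_apply, Matrix.diag, Matrix.transpose_apply]

lemma auxTraceCS (A B : Matrix n n ℝ) :
    ((Aᵀ * B).trace) ^ 2 ≤ (Aᵀ * A).trace * (Bᵀ * B).trace := by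
  rw [auxTraceTransposeMul, auxTraceTransposeMul, auxTraceTransposeMul]
  have := Finset.sum_mul_sq_le_sq_mul_sq Finset.univ
    (fun q : n × n => A q.2 q.1) (fun q : n × n => B q.2 q.1)
  simpa [pow_two] using this

lemma auxSmulOneSubPsd {A : Matrix n n ℝ} (hA : A.PosSemidef) :
    (A.trace • (1 : Matrix n n ℝ) - A).PosSemidef := by
  obtain ⟨B, hBB, hBsym⟩ := auxSqrt hA
  have htrA : A.trace = ∑ i : n, ∑ j : n, (B i j) ^ 2 := by
    rw [← hBB, Matrix.trace]
    simp only [Matrix.diag, Matrix.mul_apply]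
    congr 1; ext i; congr 1; ext j
    rw [pow_two]
    nth_rewrite 2 [← hBsym]
    rfl
  refine Matrix.PosSemidef.of_dotProduct_mulVec_nonneg ?_ ?_
  · refine Matrix.IsHermitian.sub ?_ hA.1
    show _ = _
    rw [Matrix.conjTranspose_smul]
    simp
  · intro x
    have hx : star x = x := by simp
    rw [hx, Matrix.sub_mulVec, dotProduct_sub, Matrix.smul_mulVec,
      Matrix.one_mulVec, dotProduct_smul, sub_nonneg]
    have key : x ⬝ᵥ A *ᵥ x = ∑ i : n, (∑ j : n, B i j * x j) ^ 2 := by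
      rw [← hBB, ← Matrix.mulVec_mulVec, Matrix.dotProduct_mulVec]
      have : x ᵥ* B = B *ᵥ x := by nth_rewrite 1 [← hBsym]; rw [Matrix.vecMul_transpose]
      rw [this]
      simp only [dotProduct, Matrix.mulVec, dotProduct]
      congr 1; ext i; rw [pow_two]
    have hxx : x ⬝ᵥ x = ∑ j : n, (x j) ^ 2 := by
      simp only [dotProduct]; congr 1; ext j; rw [pow_two]
    rw [key, htrA, smul_eq_mul, hxx, Finset.sum_mul]
    refine Finset.sum_le_sum fun i _ => ?_
    exact Finset.sum_mul_sq_le_sq_mul_sq _ _ _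

lemma auxAMHM {M : Matrix n n ℝ} (hM : M.PosDef) :
    (Fintype.card n : ℝ) ^ 2 ≤ M⁻¹.trace * M.trace := by
  obtain ⟨S, hSS, hSsym⟩ := auxSqrt hM.posSemidef
  have hdetS : IsUnit S.det := by
    have h2 : S.det * S.det = M.det := by rw [← Matrix.det_mul, hSS]
    have : M.det ≠ 0 := ne_of_gt hM.det_pos
    exact isUnit_iff_ne_zero.mpr (fun h => this (by rw [← h2, h, zero_mul]))
  have hSinv : S⁻¹ * S⁻¹ = M⁻¹ := by rw [← Matrix.mul_inv_rev, hSS]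
  have hSinvT : (S⁻¹)ᵀ = S⁻¹ := by rw [Matrix.transpose_nonsing_inv, hSsym]
  have h1 : (Sᵀ * S⁻¹).trace = (Fintype.card n : ℝ) := by
    rw [hSsym, Matrix.mul_nonsing_inv _ hdetS, Matrix.trace_one]
  have := auxTraceCS S S⁻¹
  rw [h1, hSsym, hSS, hSinvT, hSinv] at this
  linarith [this]

end AuxLemmas

set_option maxHeartbeats 1000000 in
/-- With `V = (W + c·(tr W)·I_p)⁻¹`, one has
`−c·(tr(V)·tr(W) − tr(V W))/(1 + c p) ≤ −tr(V W) + (1 + c)·tr(V² W²) ≤ 0`. -/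
theorem trace_V2W2_bounds (p : ℕ) (hp : 1 ≤ p) (W : Matrix (Fin p) (Fin p) ℝ)
    (hW : W.PosSemidef) (htr : 0 < W.trace) (c : ℝ) (hc : 0 < c)
    (V : Matrix (Fin p) (Fin p) ℝ) (hV : V = (W + (c * W.trace) • 1)⁻¹) :
    -(c * (V.trace * W.trace - (V * W).trace)) / (1 + c * p)
        ≤ -(V * W).trace + (1 + c) * (V * V * W * W).trace ∧
      -(V * W).trace + (1 + c) * (V * V * W * W).trace ≤ 0 := by
  set t := W.trace with ht
  set P : ℝ := (p : ℝ) with hPdef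
  have hP : (1 : ℝ) ≤ P := by rw [hPdef]; exact_mod_cast hp
  set M : Matrix (Fin p) (Fin p) ℝ := W + (c * t) • 1 with hMdef
  have hMpd : M.PosDef := by
    refine Matrix.PosDef.posSemidef_add hW ?_
    rw [Matrix.smul_one_eq_diagonal]
    exact Matrix.posDef_diagonal_iff.mpr fun _ => mul_pos hc htr
  have hdet : IsUnit M.det := (Matrix.isUnit_iff_isUnit_det M).mp hMpd.isUnit
  have hVM : V * M = 1 := by rw [hV]; exact Matrix.nonsing_inv_mul M hdet
  have hMV : M * V = 1 := by rw [hV]; exact Matrix.mul_nonsing_inv M hdet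
  have hVW : V * W = 1 - (c * t) • V := by
    have h1 : V * W + (c * t) • V = 1 := by
      rw [← hVM, hMdef, Matrix.mul_add, Matrix.mul_smul, Matrix.mul_one]
    linear_combination (norm := abel) h1
  have hWV : W * V = 1 - (c * t) • V := by
    have h1 : W * V + (c * t) • V = 1 := by
      rw [← hMV, hMdef, Matrix.add_mul, Matrix.smul_mul, Matrix.one_mul]
    linear_combination (norm := abel) h1
  have comm : V * W = W * V := by rw [hVW, hWV]
  have hVpd : V.PosDef := by rw [hV]; exact hMpd.inv
  have hVherm : Vᴴ = V := hVpd.isHermitian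
  have hVsym : Vᵀ = V := by
    rwa [Matrix.conjTranspose_eq_transpose_of_trivial] at hVherm
  set τ := V.trace with hτ
  set σ := (V * V).trace with hσ
  have e1 : (V * W).trace = P - c * t * τ := by
    rw [hVW, Matrix.trace_sub, Matrix.trace_smul, Matrix.trace_one, Fintype.card_fin,
      smul_eq_mul, hPdef]
  have h2 : V * V * W * W = (V * W) * (V * W) := by
    calc V * V * W * W = V * (W * V) * W := by
          rw [Matrix.mul_assoc V V W, ← comm, ← Matrix.mul_assoc]
      _ = (V * W) * (V * W) := by rw [← Matrix.mul_assoc V W V, Matrix.mul_assoc]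
  have expand : (1 - (c * t) • V) * (1 - (c * t) • V)
      = 1 - ((c * t) + (c * t)) • V + ((c * t) * (c * t)) • (V * V) := by
    simp only [Matrix.sub_mul, Matrix.mul_sub, Matrix.one_mul, Matrix.mul_one,
      Matrix.smul_mul, Matrix.mul_smul, smul_smul, add_smul]
    module
  have e2 : (V * V * W * W).trace = P - 2 * (c * t * τ) + (c * t) ^ 2 * σ := by
    rw [h2, hVW, expand, Matrix.trace_add, Matrix.trace_sub, Matrix.trace_smul,
      Matrix.trace_smul, Matrix.trace_one, Fintype.card_fin, smul_eq_mul, smul_eq_mul, hPdef]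
    ring
  have e3 : τ ^ 2 ≤ P * σ := by
    have hcs := auxTraceCS (1 : Matrix (Fin p) (Fin p) ℝ) V
    rw [Matrix.transpose_one, Matrix.one_mul, Matrix.one_mul, hVsym, Matrix.trace_one,
      Fintype.card_fin] at hcs
    simpa [hPdef] using hcs
  have e4 : P ^ 2 ≤ τ * (t + P * (c * t)) := by
    have h := auxAMHM hMpd
    rw [← hV] at h
    have e5 : M.trace = t + P * (c * t) := by
      rw [hMdef, Matrix.trace_add, Matrix.trace_smul, Matrix.trace_one, Fintype.card_fin,
        smul_eq_mul, hPdef, ht]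
      ring
    rw [e5, Fintype.card_fin, ← hPdef, ← hτ] at h
    exact h
  -- upper bound
  have hpsd1 : (V * W * V).PosSemidef := by
    have h := hW.mul_mul_conjTranspose_same V
    rwa [hVherm] at h
  have hpsd2 : (t • (1 : Matrix (Fin p) (Fin p) ℝ) - W).PosSemidef := by
    rw [ht]; exact auxSmulOneSubPsd hW
  have htr5 : 0 ≤ ((V * W * V) * (t • (1 : Matrix (Fin p) (Fin p) ℝ) - W)).trace :=
    auxTraceMulNonneg hpsd1 hpsd2
  have gb : (V * W * V).trace = τ - c * t * σ := by
    rw [Matrix.trace_mul_cycle V W V]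
    have : V * V * W = V * (1 - (c * t) • V) := by rw [Matrix.mul_assoc, hVW]
    rw [this, Matrix.mul_sub, Matrix.mul_one, Matrix.mul_smul, Matrix.trace_sub,
      Matrix.trace_smul, smul_eq_mul, hσ, hτ]
  have gc : ((V * W * V) * W).trace = P - 2 * (c * t * τ) + (c * t) ^ 2 * σ := by
    have h3 : V * W * V = V * V * W := by
      rw [Matrix.mul_assoc, ← comm, ← Matrix.mul_assoc]
    rw [h3, ← e2]
  have hX : 0 ≤ t * (τ - c * t * σ) - (P - 2 * (c * t * τ) + (c * t) ^ 2 * σ) := by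
    have ga : ((V * W * V) * (t • (1 : Matrix (Fin p) (Fin p) ℝ) - W)).trace
        = t * (V * W * V).trace - ((V * W * V) * W).trace := by
      rw [Matrix.mul_sub, Matrix.trace_sub, Matrix.mul_smul, Matrix.mul_one, Matrix.trace_smul,
        smul_eq_mul]
    rw [ga, gb, gc] at htr5
    exact htr5
  have hupper : -(V * W).trace + (1 + c) * (V * V * W * W).trace ≤ 0 := by
    have key : -(V * W).trace + (1 + c) * (V * V * W * W).trace
        = -(c * (t * (τ - c * t * σ) - (P - 2 * (c * t * τ) + (c * t) ^ 2 * σ))) := by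
      rw [e1, e2]; ring
    rw [key, neg_nonpos]
    exact mul_nonneg hc.le hX
  refine ⟨?_, hupper⟩
  -- lower bound
  have hden : (0 : ℝ) < 1 + c * P := by nlinarith
  rw [hPdef] at hden ⊢
  rw [div_le_iff₀ hden]
  rw [← hPdef, e1, e2]
  have hu : 0 ≤ (1 + c * P) * (c * t * τ) - c * P ^ 2 := by
    nlinarith [mul_le_mul_of_nonneg_left e4 hc.le]
  have hl : 0 ≤ (1 + c) * (c * t * τ) - c * P := by
    nlinarith [hu, hP, hc, mul_pos hc (lt_of_lt_of_le one_pos hP)]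
  have h2' : 0 ≤ P * ((c * t) ^ 2 * σ) - (c * t * τ) ^ 2 := by
    have : 0 ≤ (P * σ - τ ^ 2) * (c * t) ^ 2 :=
      mul_nonneg (by linarith [e3]) (sq_nonneg (c * t))
    nlinarith [this]
  nlinarith [mul_nonneg hl hu, h2', hP, hc.le,
    mul_nonneg (mul_nonneg (by linarith : (0:ℝ) ≤ 1 + c) (by linarith : (0:ℝ) ≤ 1 + c * P)) h2']
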